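/- Let (F_i) be a filtration and (X_i) a sequence of [0,B]-valued random variables with X_i measurable with respect to F_i. Then with probability at least 1 − δ, for all N ≥ 1: ∑_{i=1}^N E[X_i | F_{i−1}] ≤ 2·∑_{i=1}^N X_i + 4B·log(2N/δ). -/

import Mathlib

set_option maxHeartbeats 1000000
open MeasureTheory Finset Real

lemma exp_neg_le_one_sub {x : ℝ} (h0 : 0 ≤ x) (h1 : x ≤ 1) :
    Real.exp (-x) ≤ 1 - (1 - Real.exp (-1)) * x := by
  have := convexOn_exp.2 (Set.mem_univ (-1 : ℝ)) (Set.mem_univ (0 : ℝ)) h0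
    (by linarith : (0:ℝ) ≤ 1 - x) (by ring)
  simp only [smul_eq_mul, mul_zero, add_zero, mul_neg_one, Real.exp_zero] at this
  nlinarith [this]

lemma half_le_a : (1:ℝ)/2 ≤ 1 - Real.exp (-1) := by
  have h := Real.add_one_le_exp (1:ℝ)
  rw [Real.exp_neg]
  have h2 : (Real.exp 1)⁻¹ ≤ 1/2 := by
    rw [inv_le_comm₀ (by positivity) (by norm_num)]
    linarith
  linarith

section
variable {Ω : Type*} {m0 : MeasurableSpace Ω} (P : Measure Ω)
  [IsProbabilityMeasure P] {m : MeasurableSpace Ω} (hm : m ≤ m0)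

include hm

lemma step_lemma (V Y : Ω → ℝ) (B C : ℝ) (hB : 0 < B)
    (hV : StronglyMeasurable[m] V) (hVb : ∀ᵐ ω ∂P, |V ω| ≤ C)
    (hYm : StronglyMeasurable[m0] Y) (hYb : ∀ᵐ ω ∂P, Y ω ∈ Set.Icc 0 B) :
    ∫ ω, Real.exp (V ω + ((1 - Real.exp (-1)) * (P[Y|m]) ω - Y ω) / B) ∂P
      ≤ ∫ ω, Real.exp (V ω) ∂P := by
  set a : ℝ := 1 - Real.exp (-1) with ha_def
  have ha0 : 0 ≤ a := by
    have : Real.exp (-1) ≤ Real.exp 0 := Real.exp_le_exp.mpr (by norm_num)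
    rw [Real.exp_zero] at this; rw [ha_def]; linarith
  have ha1 : a ≤ 1 := by have := Real.exp_pos (-1); rw [ha_def]; linarith
  have hYm' : AEStronglyMeasurable[m0] Y P := (hYm.mono le_rfl).aestronglyMeasurable
  have hYint : Integrable Y P := by
    refine Integrable.mono' (integrable_const B) hYm' ?_
    filter_upwards [hYb] with ω h
    rw [Real.norm_eq_abs, abs_le]; exact ⟨by linarith [h.1], h.2⟩
  have hEb : ∀ᵐ ω ∂P, (P[Y|m]) ω ∈ Set.Icc 0 B := by
    have h0 : 0 ≤ᵐ[P] P[Y|m] := condExp_nonneg (hYb.mono fun ω h => h.1)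
    have hupper : P[Y|m] ≤ᵐ[P] P[(fun _ => B)|m] :=
      condExp_mono hYint (integrable_const B) (hYb.mono fun ω h => h.2)
    have hc : P[(fun _ => B)|m] = fun _ => B := condExp_const hm B
    rw [hc] at hupper
    filter_upwards [h0, hupper] with ω h1 h2; exact ⟨h1, h2⟩
  have hWm : StronglyMeasurable[m] (fun ω => Real.exp (V ω + (a / B) * (P[Y|m]) ω)) :=
    Real.continuous_exp.comp_stronglyMeasurable
      (hV.add (stronglyMeasurable_condExp.const_mul (a / B)))
  have hqm : StronglyMeasurable[m0] (fun ω => Real.exp ((-1 / B) * Y ω)) :=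
    Real.continuous_exp.comp_stronglyMeasurable (hYm.const_mul (-1 / B))
  have hq01 : ∀ᵐ ω ∂P, (0:ℝ) < Real.exp ((-1 / B) * Y ω) ∧ Real.exp ((-1 / B) * Y ω) ≤ 1 := by
    filter_upwards [hYb] with ω h
    refine ⟨Real.exp_pos _, ?_⟩
    have h2 : (-1 / B) * Y ω ≤ 0 := by
      have : 0 ≤ Y ω / B := div_nonneg h.1 hB.le
      have h3 : (-1 / B) * Y ω = -(Y ω / B) := by ring
      rw [h3]; linarith
    calc Real.exp ((-1 / B) * Y ω) ≤ Real.exp 0 := Real.exp_le_exp.mpr h2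
      _ = 1 := Real.exp_zero
  have hq_int : Integrable (fun ω => Real.exp ((-1 / B) * Y ω)) P := by
    refine Integrable.mono' (integrable_const 1) hqm.aestronglyMeasurable ?_
    filter_upwards [hq01] with ω h; rw [Real.norm_eq_abs, abs_le]
    exact ⟨by linarith [h.1], h.2⟩
  have hWb : ∀ᵐ ω ∂P, (0:ℝ) ≤ Real.exp (V ω + (a / B) * (P[Y|m]) ω) ∧
      Real.exp (V ω + (a / B) * (P[Y|m]) ω) ≤ Real.exp (C + a) := by
    filter_upwards [hVb, hEb] with ω h1 h2
    refine ⟨(Real.exp_pos _).le, Real.exp_le_exp.mpr ?_⟩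
    have h3 : (a / B) * (P[Y|m]) ω ≤ (a / B) * B :=
      mul_le_mul_of_nonneg_left h2.2 (by positivity)
    have hb : (a / B) * B = a := by field_simp
    have habs := abs_le.mp h1
    nlinarith
  have hWq_int : Integrable ((fun ω => Real.exp (V ω + (a / B) * (P[Y|m]) ω)) *
      (fun ω => Real.exp ((-1 / B) * Y ω))) P := by
    refine Integrable.mono' (integrable_const (Real.exp (C + a)))
      (((hWm.mono hm).mul hqm).aestronglyMeasurable) ?_
    filter_upwards [hWb, hq01] with ω h1 h2
    rw [Pi.mul_apply, Real.norm_eq_abs, abs_of_nonneg (mul_nonneg h1.1 h2.1.le)]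
    calc _ ≤ Real.exp (V ω + (a / B) * (P[Y|m]) ω) * 1 :=
          mul_le_mul_of_nonneg_left h2.2 h1.1
      _ ≤ _ := by rw [mul_one]; exact h1.2
  have hVexp_int : Integrable (fun ω => Real.exp (V ω)) P := by
    refine Integrable.mono' (integrable_const (Real.exp C))
      ((Real.continuous_exp.comp_stronglyMeasurable (hV.mono hm)).aestronglyMeasurable) ?_
    filter_upwards [hVb] with ω h
    rw [Real.norm_eq_abs, abs_of_nonneg (Real.exp_pos _).le]
    exact Real.exp_le_exp.mpr (by linarith [abs_le.mp h])
  have hpull := condExp_mul_of_stronglyMeasurable_left hWm hWq_int hq_int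
  have hcond : (P[fun ω => Real.exp ((-1 / B) * Y ω)|m]) ≤ᵐ[P]
      fun ω => 1 - (a / B) * (P[Y|m]) ω := by
    have h1 : (fun ω => Real.exp ((-1 / B) * Y ω)) ≤ᵐ[P] fun ω => 1 - (a / B) * Y ω := by
      filter_upwards [hYb] with ω h
      have key := exp_neg_le_one_sub (x := Y ω / B) (div_nonneg h.1 hB.le)
        ((div_le_one hB).mpr h.2)
      calc Real.exp ((-1 / B) * Y ω) = Real.exp (-(Y ω / B)) := by congr 1; ring
        _ ≤ 1 - a * (Y ω / B) := key
        _ = 1 - (a / B) * Y ω := by ring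
    have h2 := condExp_mono (m := m) hq_int
      ((integrable_const (1:ℝ)).sub (hYint.const_mul (a / B))) h1
    have h3 := condExp_sub (μ := P) (m := m) (integrable_const (1:ℝ))
      (hYint.const_mul (a / B))
    have hsmul : (fun x => (a / B) * Y x) = (a / B) • Y := by
      funext x; simp [smul_eq_mul]
    have h4 : P[fun x => (a / B) * Y x|m] =ᵐ[P] (a / B) • P[Y|m] := by
      rw [hsmul]; exact condExp_smul (μ := P) (m := m) (a / B) Y
    refine h2.trans (Filter.EventuallyEq.le ?_)
    refine h3.trans ?_
    filter_upwards [h4] with ω h4ω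
    simp only [Pi.sub_apply, Pi.smul_apply, smul_eq_mul] at h4ω ⊢
    rw [condExp_const hm, h4ω]
  calc ∫ ω, Real.exp (V ω + (a * (P[Y|m]) ω - Y ω) / B) ∂P
      = ∫ ω, ((fun ω => Real.exp (V ω + (a / B) * (P[Y|m]) ω)) *
          (fun ω => Real.exp ((-1 / B) * Y ω))) ω ∂P := by
        refine integral_congr_ae (Filter.Eventually.of_forall fun ω => ?_)
        have harg : V ω + (a * (P[Y|m]) ω - Y ω) / B
            = (V ω + (a / B) * (P[Y|m]) ω) + ((-1 / B) * Y ω) := by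
          field_simp; ring
        show Real.exp (V ω + (a * (P[Y|m]) ω - Y ω) / B) = _
        rw [Pi.mul_apply, harg, Real.exp_add]
    _ = ∫ ω, (P[(fun ω => Real.exp (V ω + (a / B) * (P[Y|m]) ω)) *
          (fun ω => Real.exp ((-1 / B) * Y ω))|m]) ω ∂P := (integral_condExp hm).symm
    _ = ∫ ω, Real.exp (V ω + (a / B) * (P[Y|m]) ω) *
          (P[fun ω => Real.exp ((-1 / B) * Y ω)|m]) ω ∂P := integral_congr_ae hpull
    _ ≤ ∫ ω, Real.exp (V ω) ∂P := by
        refine integral_mono_ae (integrable_condExp.congr hpull) hVexp_int ?_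
        filter_upwards [hcond, hWb] with ω h1 h2
        calc Real.exp (V ω + (a / B) * (P[Y|m]) ω) *
              (P[fun ω => Real.exp ((-1 / B) * Y ω)|m]) ω
            ≤ Real.exp (V ω + (a / B) * (P[Y|m]) ω) * (1 - (a / B) * (P[Y|m]) ω) :=
              mul_le_mul_of_nonneg_left h1 h2.1
          _ ≤ Real.exp (V ω + (a / B) * (P[Y|m]) ω) *
              Real.exp (-((a / B) * (P[Y|m]) ω)) := by
              refine mul_le_mul_of_nonneg_left ?_ h2.1
              have := Real.add_one_le_exp (-((a / B) * (P[Y|m]) ω))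
              linarith
          _ = Real.exp (V ω) := by rw [← Real.exp_add]; congr 1; ring

end

section
variable {Ω : Type*} {m0 : MeasurableSpace Ω} (P : Measure Ω) [IsProbabilityMeasure P]

lemma key_int (F : Filtration ℕ m0) (X : ℕ → Ω → ℝ) (B : ℝ) (hB : 0 < B)
    (hadapted : Adapted F X) (hbound : ∀ i, ∀ᵐ ω ∂P, X i ω ∈ Set.Icc 0 B) (N : ℕ) :
    ∫ ω, Real.exp (∑ i ∈ Icc 1 N,
      ((1 - Real.exp (-1)) * (P[X i|F (i - 1)]) ω - X i ω) / B) ∂P ≤ 1 := by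
  set a : ℝ := 1 - Real.exp (-1) with ha_def
  have ha0 : 0 ≤ a := by
    have : Real.exp (-1) ≤ Real.exp 0 := Real.exp_le_exp.mpr (by norm_num)
    rw [Real.exp_zero] at this; rw [ha_def]; linarith
  have ha1 : a ≤ 1 := by have := Real.exp_pos (-1); rw [ha_def]; linarith
  have hXm : ∀ i, StronglyMeasurable[m0] (X i) := fun i => ((hadapted i).mono (F.le i) le_rfl).stronglyMeasurable
  have hXint : ∀ i, Integrable (X i) P := by
    intro i
    refine Integrable.mono' (integrable_const B) (hXm i).aestronglyMeasurable ?_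
    filter_upwards [hbound i] with ω h
    rw [Real.norm_eq_abs, abs_le]; exact ⟨by linarith [h.1], h.2⟩
  have hEb : ∀ i, ∀ᵐ ω ∂P, (P[X i|F (i - 1)]) ω ∈ Set.Icc 0 B := by
    intro i
    have h0 : 0 ≤ᵐ[P] P[X i|F (i - 1)] := condExp_nonneg ((hbound i).mono fun ω h => h.1)
    have hupper : P[X i|F (i - 1)] ≤ᵐ[P] P[(fun _ => B)|F (i - 1)] :=
      condExp_mono (hXint i) (integrable_const B) ((hbound i).mono fun ω h => h.2)
    have hc : P[(fun _ => B)|F (i - 1)] = fun _ => B := condExp_const (F.le (i - 1)) B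
    rw [hc] at hupper
    filter_upwards [h0, hupper] with ω h1 h2; exact ⟨h1, h2⟩
  have hmaster : ∀ᵐ ω ∂P, ∀ i, X i ω ∈ Set.Icc 0 B ∧ (P[X i|F (i - 1)]) ω ∈ Set.Icc 0 B :=
    ae_all_iff.mpr fun i => (hbound i).and (hEb i)
  have hVm : ∀ M : ℕ, StronglyMeasurable[F M]
      (fun ω => ∑ i ∈ Icc 1 M, (a * (P[X i|F (i - 1)]) ω - X i ω) / B) := by
    intro M
    simp only [div_eq_mul_inv]
    refine Finset.stronglyMeasurable_fun_sum _ fun i hi => ?_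
    have hiM : i ≤ M := (Finset.mem_Icc.mp hi).2
    exact (((stronglyMeasurable_condExp.mono
      (F.mono (le_trans (Nat.sub_le i 1) hiM))).const_mul a).sub
      (((hadapted i).mono (F.mono hiM) le_rfl).stronglyMeasurable)).mul_const B⁻¹
  have hVb : ∀ M : ℕ, ∀ᵐ ω ∂P,
      |∑ i ∈ Icc 1 M, (a * (P[X i|F (i - 1)]) ω - X i ω) / B| ≤ 2 * M := by
    intro M
    filter_upwards [hmaster] with ω h
    calc |∑ i ∈ Icc 1 M, (a * (P[X i|F (i - 1)]) ω - X i ω) / B|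
        ≤ ∑ i ∈ Icc 1 M, |(a * (P[X i|F (i - 1)]) ω - X i ω) / B| :=
          Finset.abs_sum_le_sum_abs _ _
      _ ≤ ∑ _i ∈ Icc 1 M, 2 := by
          refine Finset.sum_le_sum fun i _ => ?_
          rw [abs_div, abs_of_pos hB, div_le_iff₀ hB]
          have h1 := (h i).1; have h2 := (h i).2
          rw [abs_le]
          constructor <;> nlinarith [h1.1, h1.2, h2.1, h2.2]
      _ ≤ 2 * M := by
          rw [Finset.sum_const, Nat.card_Icc, Nat.add_sub_cancel, nsmul_eq_mul]
          linarith
  induction N with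
  | zero =>
      rw [show (Icc 1 0 : Finset ℕ) = ∅ from Finset.Icc_eq_empty (by norm_num)]
      simp only [Finset.sum_empty, Real.exp_zero]
      simp [integral_const]
  | succ N ih =>
      have hsum : ∀ ω : Ω, ∑ i ∈ Icc 1 (N + 1), (a * (P[X i|F (i - 1)]) ω - X i ω) / B
          = (∑ i ∈ Icc 1 N, (a * (P[X i|F (i - 1)]) ω - X i ω) / B)
            + (a * (P[X (N + 1)|F N]) ω - X (N + 1) ω) / B := by
        intro ω
        rw [Finset.sum_Icc_succ_top (Nat.succ_le_succ (Nat.zero_le N))]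
        simp
      simp only [hsum]
      exact le_trans (step_lemma P (F.le N) _ (X (N + 1)) B (2 * N) hB (hVm N) (hVb N)
        (hXm (N + 1)) (hbound (N + 1))) ih

lemma markov_bound (F : Filtration ℕ m0) (X : ℕ → Ω → ℝ) (B δ : ℝ) (hB : 0 < B)
    (hδ : δ ∈ Set.Ioo (0 : ℝ) 1)
    (hadapted : Adapted F X) (hbound : ∀ i, ∀ᵐ ω ∂P, X i ω ∈ Set.Icc 0 B)
    (N : ℕ) (hN : 1 ≤ N) :
    P {ω | ¬ (∑ i ∈ Finset.Icc 1 N, (P[X i | F (i - 1)]) ω ≤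
        2 * ∑ i ∈ Finset.Icc 1 N, X i ω + 4 * B * Real.log (2 * N / δ))} ≤
      ENNReal.ofReal (δ / 4 * (1 / (N : ℝ) ^ 2)) := by
  set a : ℝ := 1 - Real.exp (-1) with ha_def
  have ha0 : 0 ≤ a := by
    have : Real.exp (-1) ≤ Real.exp 0 := Real.exp_le_exp.mpr (by norm_num)
    rw [Real.exp_zero] at this; rw [ha_def]; linarith
  have ha1 : a ≤ 1 := by have := Real.exp_pos (-1); rw [ha_def]; linarith
  have hahalf : (1:ℝ)/2 ≤ a := half_le_a
  have hNR : (1:ℝ) ≤ (N:ℝ) := by exact_mod_cast hN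
  set L : ℝ := Real.log (2 * N / δ) with hL_def
  have hL0 : 0 ≤ L := by
    refine Real.log_nonneg ?_
    rw [le_div_iff₀ hδ.1]
    have := hδ.2.le
    nlinarith
  set t : ℝ := 4 * a * L with ht_def
  -- measurability and bounds, as in key_int
  have hXm : ∀ i, StronglyMeasurable[m0] (X i) := fun i => ((hadapted i).mono (F.le i) le_rfl).stronglyMeasurable
  have hXint : ∀ i, Integrable (X i) P := by
    intro i
    refine Integrable.mono' (integrable_const B) (hXm i).aestronglyMeasurable ?_
    filter_upwards [hbound i] with ω h
    rw [Real.norm_eq_abs, abs_le]; exact ⟨by linarith [h.1], h.2⟩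
  have hEb : ∀ i, ∀ᵐ ω ∂P, (P[X i|F (i - 1)]) ω ∈ Set.Icc 0 B := by
    intro i
    have h0 : 0 ≤ᵐ[P] P[X i|F (i - 1)] := condExp_nonneg ((hbound i).mono fun ω h => h.1)
    have hupper : P[X i|F (i - 1)] ≤ᵐ[P] P[(fun _ => B)|F (i - 1)] :=
      condExp_mono (hXint i) (integrable_const B) ((hbound i).mono fun ω h => h.2)
    have hc : P[(fun _ => B)|F (i - 1)] = fun _ => B := condExp_const (F.le (i - 1)) B
    rw [hc] at hupper
    filter_upwards [h0, hupper] with ω h1 h2; exact ⟨h1, h2⟩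
  have hmaster : ∀ᵐ ω ∂P, ∀ i, X i ω ∈ Set.Icc 0 B ∧ (P[X i|F (i - 1)]) ω ∈ Set.Icc 0 B :=
    ae_all_iff.mpr fun i => (hbound i).and (hEb i)
  have hgm : StronglyMeasurable[m0]
      (fun ω => ∑ i ∈ Icc 1 N, (a * (P[X i|F (i - 1)]) ω - X i ω) / B) := by
    simp only [div_eq_mul_inv]
    refine Finset.stronglyMeasurable_fun_sum _ fun i hi => ?_
    exact (((stronglyMeasurable_condExp.mono (F.le (i - 1))).const_mul a).sub
      (hXm i)).mul_const B⁻¹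
  have hf_int : Integrable (fun ω => Real.exp
      (∑ i ∈ Icc 1 N, (a * (P[X i|F (i - 1)]) ω - X i ω) / B)) P := by
    refine Integrable.mono' (integrable_const (Real.exp (2 * N)))
      ((Real.continuous_exp.comp_stronglyMeasurable hgm).aestronglyMeasurable) ?_
    filter_upwards [hmaster] with ω h
    rw [Real.norm_eq_abs, abs_of_nonneg (Real.exp_pos _).le]
    refine Real.exp_le_exp.mpr ?_
    calc ∑ i ∈ Icc 1 N, (a * (P[X i|F (i - 1)]) ω - X i ω) / B
        ≤ ∑ _i ∈ Icc 1 N, 2 := by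
          refine Finset.sum_le_sum fun i _ => ?_
          rw [div_le_iff₀ hB]
          have h1 := (h i).1; have h2 := (h i).2
          nlinarith [h1.1, h1.2, h2.1, h2.2]
      _ ≤ 2 * N := by
          rw [Finset.sum_const, Nat.card_Icc, Nat.add_sub_cancel, nsmul_eq_mul]
          linarith
  have hint := key_int P F X B hB hadapted hbound N
  have hmarkov := mul_meas_ge_le_integral_of_nonneg
    (Filter.Eventually.of_forall fun ω => (Real.exp_pos _).le) hf_int (Real.exp t)
  set S : Set Ω := {ω | Real.exp t ≤ Real.exp
      (∑ i ∈ Icc 1 N, (a * (P[X i|F (i - 1)]) ω - X i ω) / B)} with hS_def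
  have hPS : P S ≤ ENNReal.ofReal (Real.exp (-t)) := by
    have h1 : (P S).toReal ≤ Real.exp (-t) := by
      have hexp : 0 < Real.exp t := Real.exp_pos t
      rw [Real.exp_neg, ← one_div, le_div_iff₀ hexp, mul_comm]
      simp only [measureReal_def] at hmarkov
      linarith [hmarkov, hint]
    calc P S = ENNReal.ofReal (P S).toReal := (ENNReal.ofReal_toReal (measure_ne_top P S)).symm
      _ ≤ _ := ENNReal.ofReal_le_ofReal h1
  have hN0 : (0:ℝ) < (N:ℝ) := by linarith
  have hincl : {ω | ¬ (∑ i ∈ Finset.Icc 1 N, (P[X i | F (i - 1)]) ω ≤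
      2 * ∑ i ∈ Finset.Icc 1 N, X i ω + 4 * B * L)} ⊆
      S ∪ {ω | ¬ ∀ i, X i ω ∈ Set.Icc 0 B ∧ (P[X i|F (i - 1)]) ω ∈ Set.Icc 0 B} := by
    intro ω hω
    by_cases hQ : ∀ i, X i ω ∈ Set.Icc 0 B ∧ (P[X i|F (i - 1)]) ω ∈ Set.Icc 0 B
    · left
      simp only [hS_def, Set.mem_setOf_eq]
      refine Real.exp_le_exp.mpr ?_
      have hgrw : ∑ i ∈ Icc 1 N, (a * (P[X i|F (i - 1)]) ω - X i ω) / B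
          = (a * (∑ i ∈ Icc 1 N, (P[X i|F (i - 1)]) ω) - ∑ i ∈ Icc 1 N, X i ω) / B := by
        rw [← Finset.sum_div, Finset.sum_sub_distrib, ← Finset.mul_sum]
      rw [hgrw, le_div_iff₀ hB]
      have hgt : 2 * ∑ i ∈ Finset.Icc 1 N, X i ω + 4 * B * L
          < ∑ i ∈ Finset.Icc 1 N, (P[X i | F (i - 1)]) ω := not_le.mp hω
      have hXnn : 0 ≤ ∑ i ∈ Finset.Icc 1 N, X i ω :=
        Finset.sum_nonneg fun i _ => (hQ i).1.1
      have hmul := mul_le_mul_of_nonneg_left hgt.le ha0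
      nlinarith [mul_nonneg (by linarith : (0:ℝ) ≤ 2 * a - 1) hXnn]
    · right; exact hQ
  have hT0 : P {ω | ¬ ∀ i, X i ω ∈ Set.Icc 0 B ∧ (P[X i|F (i - 1)]) ω ∈ Set.Icc 0 B} = 0 :=
    ae_iff.mp hmaster
  have hfinal : Real.exp (-t) ≤ δ / 4 * (1 / (N : ℝ) ^ 2) := by
    set b : ℝ := δ / (2 * N) with hb_def
    have hb0 : 0 < b := div_pos hδ.1 (by linarith)
    have hb1 : b ≤ 1 := by
      rw [hb_def, div_le_one (by linarith)]
      nlinarith [hδ.2.le]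
    have hexp_eq : Real.exp (-t) = b ^ (4 * a : ℝ) := by
      rw [Real.rpow_def_of_pos hb0]
      congr 1
      have hbinv : b = (2 * (N:ℝ) / δ)⁻¹ := by rw [inv_div]
      rw [hbinv, Real.log_inv, ← hL_def, ht_def]
      ring
    have h2le : b ^ (4 * a : ℝ) ≤ b ^ (2 : ℝ) :=
      Real.rpow_le_rpow_of_exponent_ge hb0 hb1 (by linarith)
    have hb2 : b ^ (2 : ℝ) = b ^ 2 := by
      rw [show (2:ℝ) = ((2:ℕ):ℝ) by norm_num, Real.rpow_natCast]
    have hfin : b ^ 2 ≤ δ / 4 * (1 / (N : ℝ) ^ 2) := by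
      rw [hb_def, div_pow]
      have e1 : (2 * (N:ℝ)) ^ 2 = 4 * (N:ℝ) ^ 2 := by ring
      have e2 : δ / 4 * (1 / (N:ℝ) ^ 2) = δ / (4 * (N:ℝ) ^ 2) := by
        field_simp
      rw [e1, e2]
      gcongr
      nlinarith [hδ.1.le, hδ.2.le]
    calc Real.exp (-t) = b ^ (4 * a : ℝ) := hexp_eq
      _ ≤ b ^ (2:ℝ) := h2le
      _ = b ^ 2 := hb2
      _ ≤ _ := hfin
  calc P {ω | ¬ (∑ i ∈ Finset.Icc 1 N, (P[X i | F (i - 1)]) ω ≤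
        2 * ∑ i ∈ Finset.Icc 1 N, X i ω + 4 * B * L)}
      ≤ P (S ∪ {ω | ¬ ∀ i, X i ω ∈ Set.Icc 0 B ∧ (P[X i|F (i - 1)]) ω ∈ Set.Icc 0 B}) :=
        measure_mono hincl
    _ ≤ P S + P {ω | ¬ ∀ i, X i ω ∈ Set.Icc 0 B ∧ (P[X i|F (i - 1)]) ω ∈ Set.Icc 0 B} :=
        measure_union_le _ _
    _ = P S := by rw [hT0, add_zero]
    _ ≤ ENNReal.ofReal (Real.exp (-t)) := hPS
    _ ≤ _ := ENNReal.ofReal_le_ofReal hfinal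

end

/-- Martingale concentration: for an adapted sequence of `[0,B]`-valued random variables,
with probability at least `1 - δ`, for every `N ≥ 1`,
`∑_{i=1}^N E[Xᵢ | F_{i-1}] ≤ 2 ∑_{i=1}^N Xᵢ + 4 B log (2N/δ)`. -/
theorem stmt_16 {Ω : Type*} {m0 : MeasurableSpace Ω} (P : Measure Ω) [IsProbabilityMeasure P]
    (F : Filtration ℕ m0) (X : ℕ → Ω → ℝ) (B δ : ℝ) (hB : 0 < B)
    (hδ : δ ∈ Set.Ioo (0 : ℝ) 1)
    (hadapted : Adapted F X)
    (hbound : ∀ i, ∀ᵐ ω ∂P, X i ω ∈ Set.Icc 0 B) :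
    ENNReal.ofReal (1 - δ) ≤
      P {ω | ∀ N : ℕ, 1 ≤ N →
        ∑ i ∈ Finset.Icc 1 N, (P[X i | F (i - 1)]) ω ≤
          2 * ∑ i ∈ Finset.Icc 1 N, X i ω + 4 * B * Real.log (2 * N / δ)} := by
  set bad : ℕ → Set Ω := fun N => {ω | 1 ≤ N ∧
    ¬ (∑ i ∈ Finset.Icc 1 N, (P[X i | F (i - 1)]) ω ≤
        2 * ∑ i ∈ Finset.Icc 1 N, X i ω + 4 * B * Real.log (2 * N / δ))} with hbad_def
  have hG : {ω | ∀ N : ℕ, 1 ≤ N →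
      ∑ i ∈ Finset.Icc 1 N, (P[X i | F (i - 1)]) ω ≤
        2 * ∑ i ∈ Finset.Icc 1 N, X i ω + 4 * B * Real.log (2 * N / δ)}
      = (⋃ N, bad N)ᶜ := by
    ext ω
    simp only [hbad_def, Set.mem_compl_iff, Set.mem_iUnion, Set.mem_setOf_eq, not_exists,
      not_and, not_not]
  have hbadmeas : ∀ N, MeasurableSet (bad N) := by
    intro N
    rcases Nat.eq_zero_or_pos N with h0 | h1
    · have : bad N = ∅ := by subst h0; ext ω; simp [hbad_def]
      rw [this]; exact MeasurableSet.empty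
    · have heq : bad N = {ω | 2 * ∑ i ∈ Finset.Icc 1 N, X i ω
          + 4 * B * Real.log (2 * N / δ) < ∑ i ∈ Finset.Icc 1 N, (P[X i | F (i - 1)]) ω} := by
        ext ω
        simp only [hbad_def, Set.mem_setOf_eq, not_le]
        exact ⟨fun h => h.2, fun h => ⟨h1, h⟩⟩
      rw [heq]
      have hm1 : Measurable fun ω => ∑ i ∈ Finset.Icc 1 N, (P[X i | F (i - 1)]) ω :=
        Finset.measurable_fun_sum _ fun i _ =>
          (stronglyMeasurable_condExp.mono (F.le (i - 1))).measurable
      have hm2 : Measurable fun ω => ∑ i ∈ Finset.Icc 1 N, X i ω :=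
        Finset.measurable_fun_sum _ fun i _ => (hadapted i).mono (F.le i) le_rfl
      exact measurableSet_lt ((hm2.const_mul 2).add_const _) hm1
  have hkey : P (⋃ N, bad N) ≤ ENNReal.ofReal δ := by
    calc P (⋃ N, bad N) ≤ ∑' N, P (bad N) := measure_iUnion_le _
      _ ≤ ∑' N : ℕ, ENNReal.ofReal (δ / 4 * (1 / (N : ℝ) ^ 2)) := by
          refine ENNReal.tsum_le_tsum fun N => ?_
          rcases Nat.eq_zero_or_pos N with h0 | h1
          · have : bad N = ∅ := by subst h0; ext ω; simp [hbad_def]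
            rw [this]; simp
          · refine le_trans (measure_mono ?_) (markov_bound P F X B δ hB hδ hadapted hbound N h1)
            intro ω hω; exact hω.2
      _ = ENNReal.ofReal (∑' N : ℕ, δ / 4 * (1 / (N : ℝ) ^ 2)) :=
          (ENNReal.ofReal_tsum_of_nonneg
            (fun n => mul_nonneg (by linarith [hδ.1] : (0:ℝ) ≤ δ / 4) (by positivity))
            ((summable_one_div_nat_pow.mpr one_lt_two).mul_left (δ / 4))).symm
      _ ≤ ENNReal.ofReal δ := by
          refine ENNReal.ofReal_le_ofReal ?_
          rw [tsum_mul_left, hasSum_zeta_two.tsum_eq]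
          have hpi2 : Real.pi ^ 2 ≤ 16 := by nlinarith [Real.pi_le_four, Real.pi_pos]
          nlinarith [hpi2, hδ.1]
  rw [hG, prob_compl_eq_one_sub (MeasurableSet.iUnion hbadmeas)]
  have h1 : ENNReal.ofReal (1 - δ) = 1 - ENNReal.ofReal δ := by
    rw [ENNReal.ofReal_sub _ hδ.1.le, ENNReal.ofReal_one]
  rw [h1]
  exact tsub_le_tsub_left hkey 1
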